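/- Let E and F be Banach spaces, each isomorphic to its own square (i.e., there exist continuous linear bijections with continuous inverses E → E × E and F → F × F). Suppose each is isomorphic to a complemented subspace of the other, i.e., there exist bounded linear maps S₁ : E → F, P₁ : F → E with P₁ ∘ S₁ = id_E, and bounded linear maps S₂ : F → E, P₂ : E → F with P₂ ∘ S₂ = id_F. Then E and F are isomorphic: there exists a continuous linear bijection from E onto F with continuous inverse. -/

import Mathlib

/-- If `P ∘ S = id`, then `F ≃L E × ker P`. -/
lemma pelczynski_split {E F : Type*} [NormedAddCommGroup E] [NormedSpace ℝ E]
    [NormedAddCommGroup F] [NormedSpace ℝ F]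
    (S : E →L[ℝ] F) (P : F →L[ℝ] E) (h : ∀ x : E, P (S x) = x) :
    Nonempty (F ≃L[ℝ] E × (LinearMap.ker (P : F →ₗ[ℝ] E))) := by
  set Q : F →L[ℝ] F := ContinuousLinearMap.id ℝ F - S.comp P with hQ
  have hker : ∀ y : F, Q y ∈ LinearMap.ker (P : F →ₗ[ℝ] E) := by
    intro y
    simp [hQ, LinearMap.mem_ker, h (P y)]
  refine ⟨ContinuousLinearEquiv.equivOfInverse
    (P.prod (Q.codRestrict (LinearMap.ker (P : F →ₗ[ℝ] E)) hker))
    ((S.comp (ContinuousLinearMap.fst ℝ E (LinearMap.ker (P : F →ₗ[ℝ] E)))) +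
      ((LinearMap.ker (P : F →ₗ[ℝ] E)).subtypeL.comp (ContinuousLinearMap.snd ℝ E (LinearMap.ker (P : F →ₗ[ℝ] E)))))
    ?_ ?_⟩
  · intro y
    simp [hQ]
  · rintro ⟨x, z, hz⟩
    have hz' : P z = 0 := hz
    ext
    · simp [h x, hz']
    · simp [hQ, h x, hz']

theorem pelczynski_decomposition
    (E F : Type*) [NormedAddCommGroup E] [NormedSpace ℝ E] [CompleteSpace E]
    [NormedAddCommGroup F] [NormedSpace ℝ F] [CompleteSpace F]
    (hE : Nonempty (E ≃L[ℝ] E × E)) (hF : Nonempty (F ≃L[ℝ] F × F))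
    (h₁ : ∃ (S₁ : E →L[ℝ] F) (P₁ : F →L[ℝ] E), ∀ x : E, P₁ (S₁ x) = x)
    (h₂ : ∃ (S₂ : F →L[ℝ] E) (P₂ : E →L[ℝ] F), ∀ y : F, P₂ (S₂ y) = y) :
    Nonempty (E ≃L[ℝ] F) := by
  obtain ⟨S₁, P₁, hP₁⟩ := h₁
  obtain ⟨S₂, P₂, hP₂⟩ := h₂
  obtain ⟨eF⟩ := pelczynski_split S₁ P₁ hP₁   -- F ≃L E × X
  obtain ⟨eE⟩ := pelczynski_split S₂ P₂ hP₂   -- E ≃L F × Y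
  obtain ⟨sE⟩ := hE
  obtain ⟨sF⟩ := hF
  set X := LinearMap.ker (P₁ : F →ₗ[ℝ] E)
  set Y := LinearMap.ker (P₂ : E →ₗ[ℝ] F)
  -- F ≃L E × F
  have eFE : F ≃L[ℝ] E × F :=
    eF.trans ((sE.prodCongr (ContinuousLinearEquiv.refl ℝ X)).trans
      ((((LinearIsometryEquiv.prodAssoc ℝ E E X).toContinuousLinearEquiv).trans
        ((ContinuousLinearEquiv.refl ℝ E).prodCongr eF.symm))))
  -- E ≃L F × E
  have eEF : E ≃L[ℝ] F × E :=
    eE.trans ((sF.prodCongr (ContinuousLinearEquiv.refl ℝ Y)).trans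
      ((((LinearIsometryEquiv.prodAssoc ℝ F F Y).toContinuousLinearEquiv).trans
        ((ContinuousLinearEquiv.refl ℝ F).prodCongr eE.symm))))
  exact ⟨eEF.trans ((ContinuousLinearEquiv.prodComm ℝ F E).trans eFE.symm)⟩
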